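/- Let p be a prime and n a positive integer. If A ⊆ ℤ_p × ℤ_{p^n} is a spectral set with |A| > p^n, then A = ℤ_p × ℤ_{p^n}. -/

import Mathlib

open Complex Pointwise

/-- The inner product on `ℤ_p × ℤ_{p^n}`: `⟨u,v⟩ = p^(n-1)·u₁·v₁ + u₂·v₂` in `ℤ_{p^n}`. -/
def inn (p n : ℕ) (u v : ZMod p × ZMod (p ^ n)) : ZMod (p ^ n) :=
  (p : ZMod (p ^ n)) ^ (n - 1) * (u.1.val : ZMod (p ^ n)) * (v.1.val : ZMod (p ^ n)) +
    u.2 * v.2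

/-- The character `χ_g(h) = e^(2πi⟨g,h⟩/p^n)`. -/
noncomputable def chi (p n : ℕ) (g h : ZMod p × ZMod (p ^ n)) : ℂ :=
  Complex.exp (2 * Real.pi * Complex.I * ((inn p n g h).val : ℂ) / ((p : ℂ) ^ n))

/-- `χ_g(A) = Σ_{a ∈ A} χ_g(a)`. -/
noncomputable def chiSum (p n : ℕ) (g : ZMod p × ZMod (p ^ n))
    (A : Finset (ZMod p × ZMod (p ^ n))) : ℂ :=
  ∑ a ∈ A, chi p n g a

/-- The zero set `Z_A = {g : χ_g(A) = 0}`. -/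
def zeroSet (p n : ℕ) (A : Finset (ZMod p × ZMod (p ^ n))) :
    Set (ZMod p × ZMod (p ^ n)) :=
  {g | chiSum p n g A = 0}

/-- `(A,B)` is a spectral pair: `|A| = |B|` and `χ_{b-b'}(A) = 0` for distinct `b,b' ∈ B`. -/
def SpectralPair (p n : ℕ) (A B : Finset (ZMod p × ZMod (p ^ n))) : Prop :=
  A.card = B.card ∧ ∀ b ∈ B, ∀ b' ∈ B, b ≠ b' → chiSum p n (b - b') A = 0

/-- `A` is a spectral set: some `B` makes `(A,B)` a spectral pair. -/
def SpectralSet (p n : ℕ) (A : Finset (ZMod p × ZMod (p ^ n))) : Prop :=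
  ∃ B : Finset (ZMod p × ZMod (p ^ n)), SpectralPair p n A B

/-- `(A,T)` is a tiling pair: every `g` has a unique representation `g = a + t`, `a ∈ A`, `t ∈ T`. -/
def TilingPair (p n : ℕ) (A T : Finset (ZMod p × ZMod (p ^ n))) : Prop :=
  ∀ g : ZMod p × ZMod (p ^ n),
    ∃! x : (ZMod p × ZMod (p ^ n)) × (ZMod p × ZMod (p ^ n)),
      x.1 ∈ A ∧ x.2 ∈ T ∧ g = x.1 + x.2

/-- `A` tiles `ℤ_p × ℤ_{p^n}` by translation. -/
def Tiles (p n : ℕ) (A : Finset (ZMod p × ZMod (p ^ n))) : Prop :=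
  ∃ T : Finset (ZMod p × ZMod (p ^ n)), TilingPair p n A T

/-! ### Auxiliary lemmas -/

section MyAux

variable {p n : ℕ}

/-- `p^n • x = 0` in `ℤ_p × ℤ_{p^n}`. -/
lemma my_pn_smul (hp : 0 < p) (hn : 1 ≤ n) (x : ZMod p × ZMod (p ^ n)) :
    (p ^ n) • x = 0 := by
  haveI : NeZero p := ⟨hp.ne'⟩
  have h1 : (p ^ n) • x.1 = 0 := by
    rw [nsmul_eq_mul]
    have : ((p ^ n : ℕ) : ZMod p) = 0 := by
      push_cast
      rw [ZMod.natCast_self, zero_pow (by omega)]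
    rw [Nat.cast_pow] at this ⊢
    rw [this, zero_mul]
  have h2 : (p ^ n) • x.2 = 0 := by
    rw [nsmul_eq_mul]
    have : ((p ^ n : ℕ) : ZMod (p ^ n)) = 0 := ZMod.natCast_self _
    rw [Nat.cast_pow] at this ⊢
    rw [this, zero_mul]
  have : (p ^ n) • x = ((p ^ n) • x.1, (p ^ n) • x.2) := rfl
  rw [this, h1, h2]
  rfl

/-- Key mod-`p` cast lemma. -/
lemma my_mulp (hn : 1 ≤ n) (a : ℕ) :
    (p : ZMod (p ^ n)) ^ (n - 1) * ((a % p : ℕ) : ZMod (p ^ n)) =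
      (p : ZMod (p ^ n)) ^ (n - 1) * (a : ZMod (p ^ n)) := by
  have hp0 : (p : ZMod (p ^ n)) ^ (n - 1) * (p : ZMod (p ^ n)) = 0 := by
    rw [← pow_succ, Nat.sub_add_cancel hn, ← Nat.cast_pow, ZMod.natCast_self]
  have hcast : (p : ZMod (p ^ n)) * ((a / p : ℕ) : ZMod (p ^ n)) +
      ((a % p : ℕ) : ZMod (p ^ n)) = (a : ZMod (p ^ n)) := by
    rw [← Nat.cast_mul, ← Nat.cast_add, Nat.div_add_mod]
  linear_combination ((p : ZMod (p ^ n)) ^ (n - 1)) * hcast -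
    ((a / p : ℕ) : ZMod (p ^ n)) * hp0

lemma my_inn_add_left (hp : 0 < p) (hn : 1 ≤ n) (u u' v : ZMod p × ZMod (p ^ n)) :
    inn p n (u + u') v = inn p n u v + inn p n u' v := by
  haveI : NeZero p := ⟨hp.ne'⟩
  unfold inn
  have h1 : (u + u').1 = u.1 + u'.1 := rfl
  rw [h1, ZMod.val_add, my_mulp hn]
  have h2 : (u + u').2 = u.2 + u'.2 := rfl
  rw [h2]
  push_cast
  ring

lemma my_inn_add_right (hp : 0 < p) (hn : 1 ≤ n) (u v v' : ZMod p × ZMod (p ^ n)) :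
    inn p n u (v + v') = inn p n u v + inn p n u v' := by
  haveI : NeZero p := ⟨hp.ne'⟩
  unfold inn
  have h1 : (v + v').1 = v.1 + v'.1 := rfl
  have h2 : (v + v').2 = v.2 + v'.2 := rfl
  rw [h1, h2, ZMod.val_add]
  have h3 := my_mulp (p := p) hn (v.1.val + v'.1.val)
  calc (p : ZMod (p ^ n)) ^ (n - 1) * (u.1.val : ZMod (p ^ n)) *
        (((v.1.val + v'.1.val) % p : ℕ) : ZMod (p ^ n)) + u.2 * (v.2 + v'.2)
      = (p : ZMod (p ^ n)) ^ (n - 1) * (((v.1.val + v'.1.val) % p : ℕ) : ZMod (p ^ n)) *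
        (u.1.val : ZMod (p ^ n)) + u.2 * (v.2 + v'.2) := by ring
    _ = (p : ZMod (p ^ n)) ^ (n - 1) * (((v.1.val + v'.1.val : ℕ)) : ZMod (p ^ n)) *
        (u.1.val : ZMod (p ^ n)) + u.2 * (v.2 + v'.2) := by rw [h3]
    _ = _ := by push_cast; ring

lemma my_inn_zero_left (hp : 0 < p) (v : ZMod p × ZMod (p ^ n)) :
    inn p n 0 v = 0 := by
  haveI : NeZero p := ⟨hp.ne'⟩
  unfold inn
  have h1 : (0 : ZMod p × ZMod (p ^ n)).1 = 0 := rfl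
  rw [h1]
  simp [ZMod.val_zero]

end MyAux

/-! ### The root of unity -/

section MyZeta

variable {p n : ℕ}

noncomputable def myZeta (p n : ℕ) : ℂ :=
  Complex.exp (2 * Real.pi * Complex.I / ((p ^ n : ℕ) : ℂ))

lemma myZeta_prim (hp : 0 < p) : IsPrimitiveRoot (myZeta p n) (p ^ n) :=
  Complex.isPrimitiveRoot_exp (p ^ n) (pow_ne_zero n hp.ne')

lemma myZeta_pow_eq_one (hp : 0 < p) : (myZeta p n) ^ (p ^ n) = 1 :=
  (myZeta_prim hp).pow_eq_one

lemma myZeta_pow_mod (hp : 0 < p) (a : ℕ) :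
    (myZeta p n) ^ (a % p ^ n) = (myZeta p n) ^ a :=
  (pow_eq_pow_mod a (myZeta_pow_eq_one hp)).symm

lemma chi_eq_zeta (hp : 0 < p) (g h : ZMod p × ZMod (p ^ n)) :
    chi p n g h = (myZeta p n) ^ (inn p n g h).val := by
  unfold chi myZeta
  rw [← Complex.exp_nat_mul]
  congr 1
  have : ((p ^ n : ℕ) : ℂ) = (p : ℂ) ^ n := by push_cast; ring
  rw [this]
  ring

lemma myZeta_val_add (hp : 0 < p) (u v : ZMod (p ^ n)) :
    (myZeta p n) ^ (u + v).val = (myZeta p n) ^ u.val * (myZeta p n) ^ v.val := by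
  haveI : NeZero (p ^ n) := ⟨pow_ne_zero n hp.ne'⟩
  rw [ZMod.val_add, myZeta_pow_mod hp, pow_add]

lemma myZeta_val_mul_nat (hp : 0 < p) (m : ℕ) (c : ZMod (p ^ n)) :
    (myZeta p n) ^ (((m : ZMod (p ^ n)) * c).val) = ((myZeta p n) ^ c.val) ^ m := by
  haveI : NeZero (p ^ n) := ⟨pow_ne_zero n hp.ne'⟩
  rw [ZMod.val_mul, myZeta_pow_mod hp, ZMod.val_natCast, ← pow_mul]
  conv_rhs => rw [← myZeta_pow_mod hp (c.val * m)]
  rw [← myZeta_pow_mod hp (m % p ^ n * c.val)]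
  congr 1
  rw [Nat.mod_mul_mod, Nat.mul_comm]

lemma my_sum_pow_val {k : ℕ} [NeZero k] (w : ℂ) (hw : w ≠ 1) (hwk : w ^ k = 1) :
    ∑ i : ZMod k, w ^ i.val = 0 := by
  have : ∑ i : ZMod k, w ^ i.val = ∑ j ∈ Finset.range k, w ^ j := by
    apply Finset.sum_nbij' (fun i : ZMod k => i.val) (fun j : ℕ => (j : ZMod k))
    · intro a _; exact Finset.mem_range.mpr (ZMod.val_lt a)
    · intro a _; exact Finset.mem_univ _
    · intro a _; exact ZMod.natCast_rightInverse a
    · intro a ha; exact ZMod.val_cast_of_lt (Finset.mem_range.mp ha)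
    · intro a _; rfl
  rw [this, geom_sum_eq hw, hwk, sub_self, zero_div]

end MyZeta

/-! ### Vanishing of the full character sum -/

section SumChi

variable {p n : ℕ}

lemma my_sum_chi [NeZero p] [NeZero (p ^ n)] (hp : p.Prime) (hn : 1 ≤ n)
    (x : ZMod p × ZMod (p ^ n)) (hx : x ≠ 0) :
    ∑ g : ZMod p × ZMod (p ^ n), chi p n g x = 0 := by
  set ζ := myZeta p n with hζ
  set c : ZMod (p ^ n) := (p : ZMod (p ^ n)) ^ (n - 1) * (x.1.val : ZMod (p ^ n)) with hc
  have hterm : ∀ g : ZMod p × ZMod (p ^ n),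
      chi p n g x = (ζ ^ c.val) ^ g.1.val * (ζ ^ x.2.val) ^ g.2.val := by
    intro g
    rw [chi_eq_zeta hp.pos]
    have h2 : ((g.2.val : ℕ) : ZMod (p ^ n)) = g.2 := ZMod.natCast_rightInverse g.2
    have hinn : inn p n g x =
        ((g.1.val : ℕ) : ZMod (p ^ n)) * c + ((g.2.val : ℕ) : ZMod (p ^ n)) * x.2 := by
      unfold inn
      rw [h2, hc]
      ring
    rw [hinn, myZeta_val_add hp.pos, myZeta_val_mul_nat hp.pos, ← hζ]
    congr 1
    rw [← h2, myZeta_val_mul_nat hp.pos]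
  have hsplit : ∑ g : ZMod p × ZMod (p ^ n), chi p n g x =
      (∑ g₁ : ZMod p, (ζ ^ c.val) ^ g₁.val) * (∑ g₂ : ZMod (p ^ n), (ζ ^ x.2.val) ^ g₂.val) := by
    calc ∑ g : ZMod p × ZMod (p ^ n), chi p n g x
        = ∑ g₁ : ZMod p, ∑ g₂ : ZMod (p ^ n), chi p n (g₁, g₂) x := Fintype.sum_prod_type _
      _ = ∑ g₁ : ZMod p, ∑ g₂ : ZMod (p ^ n), (ζ ^ c.val) ^ g₁.val * (ζ ^ x.2.val) ^ g₂.val :=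
          Finset.sum_congr rfl fun g₁ _ => Finset.sum_congr rfl fun g₂ _ => hterm (g₁, g₂)
      _ = (∑ g₁ : ZMod p, (ζ ^ c.val) ^ g₁.val) * (∑ g₂ : ZMod (p ^ n), (ζ ^ x.2.val) ^ g₂.val) := by
          rw [Finset.sum_mul_sum]
  rw [hsplit]
  rcases eq_or_ne x.2 0 with h2 | h2
  · have h1 : x.1 ≠ 0 := by
      intro h
      exact hx (Prod.ext_iff.mpr ⟨h, h2⟩)
    set e := p ^ (n - 1) * x.1.val with he
    have hclt : e < p ^ n := by
      calc e < p ^ (n - 1) * p :=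
            mul_lt_mul_of_pos_left (ZMod.val_lt x.1) (pow_pos hp.pos (n - 1))
        _ = p ^ n := by rw [← pow_succ, Nat.sub_add_cancel hn]
    have hcv : c = ((e : ℕ) : ZMod (p ^ n)) := by rw [hc, he]; push_cast; ring
    have hcval : c.val = e := by rw [hcv, ZMod.val_cast_of_lt hclt]
    have he0 : 0 < e := Nat.mul_pos (pow_pos hp.pos _)
      (Nat.pos_of_ne_zero (fun h => h1 ((ZMod.val_eq_zero x.1).mp h)))
    have hw1 : ζ ^ c.val ≠ 1 := by
      rw [hcval]; exact (myZeta_prim hp.pos).pow_ne_one_of_pos_of_lt he0.ne' hclt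
    have hwp : (ζ ^ c.val) ^ p = 1 := by
      rw [hcval, ← pow_mul]
      have hep : e * p = p ^ n * x.1.val := by
        calc e * p = p ^ (n - 1) * p * x.1.val := by ring
          _ = p ^ n * x.1.val := by rw [← pow_succ, Nat.sub_add_cancel hn]
      rw [hep, pow_mul, myZeta_pow_eq_one hp.pos, one_pow]
    rw [my_sum_pow_val _ hw1 hwp, zero_mul]
  · have hw1 : ζ ^ x.2.val ≠ 1 :=
      (myZeta_prim hp.pos).pow_ne_one_of_pos_of_lt
        (fun h => h2 ((ZMod.val_eq_zero x.2).mp h)) (ZMod.val_lt x.2)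
    have hwq : (ζ ^ x.2.val) ^ (p ^ n) = 1 := by
      rw [← pow_mul, mul_comm, pow_mul, myZeta_pow_eq_one hp.pos, one_pow]
    rw [my_sum_pow_val _ hw1 hwq, mul_zero]

end SumChi

/-! ### The pigeonhole lemma -/

section Pigeon

variable {p n : ℕ}

lemma my_exists_pair [NeZero p] [NeZero (p ^ n)] (hp : p.Prime) (hn : 1 ≤ n)
    (B : Finset (ZMod p × ZMod (p ^ n))) (hB : p ^ n < B.card)
    (g : ZMod p × ZMod (p ^ n)) (hg : g ≠ 0) :
    ∃ b ∈ B, ∃ b' ∈ B, b ≠ b' ∧ ∃ m : ℕ, ¬ p ∣ m ∧ b - b' = m • g := by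
  classical
  by_contra hcon
  push_neg at hcon
  set H : AddSubgroup (ZMod p × ZMod (p ^ n)) := AddSubgroup.zmultiples g with hHdef
  set K : AddSubgroup (ZMod p × ZMod (p ^ n)) := AddSubgroup.zmultiples (p • g) with hKdef
  have key : ∀ b ∈ B, ∀ b' ∈ B, b - b' ∈ H → b - b' ∈ K := by
    intro b hb b' hb' hmem
    rcases eq_or_ne b b' with rfl | hne
    · simpa using K.zero_mem
    obtain ⟨z, hz⟩ := AddSubgroup.mem_zmultiples_iff.mp hmem
    set Q : ℤ := ((p ^ n : ℕ) : ℤ) with hQ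
    have hQpos : (0 : ℤ) < Q := by
      rw [hQ]; exact_mod_cast pow_pos hp.pos n
    set m : ℕ := (z % Q).toNat with hm
    have hzm : (m : ℤ) = z % Q := Int.toNat_of_nonneg (Int.emod_nonneg z hQpos.ne')
    have hQg : Q • g = 0 := by
      rw [hQ, natCast_zsmul]
      exact my_pn_smul hp.pos hn g
    have hsm : m • g = b - b' := by
      have hzg : z • g = (m : ℤ) • g := by
        conv_lhs => rw [← Int.mul_ediv_add_emod z Q]
        rw [add_zsmul, mul_comm, mul_zsmul, hQg, smul_zero, zero_add, ← hzm]
      rw [← hz, hzg, natCast_zsmul]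
    by_cases hpm : p ∣ m
    · obtain ⟨t, ht⟩ := hpm
      refine AddSubgroup.mem_zmultiples_iff.mpr ⟨(t : ℤ), ?_⟩
      rw [natCast_zsmul, ← mul_smul, mul_comm, ← ht, hsm]
    · exact (hcon b hb b' hb' hne m hpm hsm.symm).elim
  haveI : Fintype ((ZMod p × ZMod (p ^ n)) ⧸ H) := Fintype.ofFinite _
  haveI : Fintype K := Fintype.ofFinite _
  set π : (ZMod p × ZMod (p ^ n)) → (ZMod p × ZMod (p ^ n)) ⧸ H :=
    fun x => QuotientAddGroup.mk x with hπ
  have hfiber : ∀ a ∈ B.image π, (B.filter fun x => π x = a).card ≤ Nat.card K := by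
    intro a ha
    obtain ⟨b₀, hb₀B, hb₀⟩ := Finset.mem_image.mp ha
    have hle : (B.filter fun x => π x = a).card ≤
        (Set.toFinset (K : Set (ZMod p × ZMod (p ^ n)))).card := by
      apply Finset.card_le_card_of_injOn (fun x => x - b₀)
      · intro x hx
        rw [Finset.mem_coe, Set.mem_toFinset]
        have hxB := (Finset.mem_filter.mp hx).1
        have hπx : π b₀ = π x := by rw [(Finset.mem_filter.mp hx).2, hb₀]
        have hmem : x - b₀ ∈ H := by
          have h := (QuotientAddGroup.eq).mp hπx
          rwa [neg_add_eq_sub] at h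
        exact key x hxB b₀ hb₀B hmem
      · intro x _ y _ hxy
        exact sub_left_injective hxy
    calc (B.filter fun x => π x = a).card
        ≤ (Set.toFinset (K : Set (ZMod p × ZMod (p ^ n)))).card := hle
      _ = Nat.card K := by rw [Set.toFinset_card, Nat.card_eq_fintype_card]; rfl
  have h1 : B.card ≤ Nat.card K * (B.image π).card :=
    Finset.card_le_mul_card_image (f := π) B _ hfiber
  have h2 : (B.image π).card ≤ Nat.card ((ZMod p × ZMod (p ^ n)) ⧸ H) := by
    rw [Nat.card_eq_fintype_card]
    exact Finset.card_le_univ _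
  set d := addOrderOf g with hd
  have hd_dvd : d ∣ p ^ n := addOrderOf_dvd_of_nsmul_eq_zero (my_pn_smul hp.pos hn g)
  have hd1 : d ≠ 1 := fun h => hg (AddMonoid.addOrderOf_eq_one_iff.mp h)
  have hpd : p ∣ d := by
    obtain ⟨k, hk, hdk⟩ := (Nat.dvd_prime_pow hp).mp hd_dvd
    rcases Nat.eq_zero_or_pos k with rfl | hk0
    · simp [hdk] at hd1
    · rw [hdk]; exact dvd_pow_self p hk0.ne'
  obtain ⟨e, he⟩ := hpd
  have hKcard : Nat.card K = e := by
    rw [hKdef, Nat.card_zmultiples, addOrderOf_nsmul' g hp.pos.ne', ← hd,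
      Nat.gcd_eq_right ⟨e, he⟩, he, Nat.mul_div_cancel_left e hp.pos]
  have hHcard : Nat.card H = d := Nat.card_zmultiples g
  have hGcard : Nat.card (ZMod p × ZMod (p ^ n)) = p * p ^ n := by
    rw [Nat.card_eq_fintype_card, Fintype.card_prod, ZMod.card, ZMod.card]
  have hquot := AddSubgroup.card_eq_card_quotient_mul_card_addSubgroup H
  set Qc := Nat.card ((ZMod p × ZMod (p ^ n)) ⧸ H) with hQc
  have hQe : Qc * e = p ^ n := by
    have h3 : p * (Qc * e) = p * p ^ n := by
      rw [← hGcard, hquot, hHcard, he]; ring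
    exact Nat.eq_of_mul_eq_mul_left hp.pos h3
  have : B.card ≤ p ^ n := by
    calc B.card ≤ Nat.card K * (B.image π).card := h1
      _ ≤ e * Qc := by rw [hKcard]; exact Nat.mul_le_mul_left e h2
      _ = p ^ n := by rw [mul_comm]; exact hQe
  omega

end Pigeon

/-! ### The Galois descent lemma -/

section Galois

variable {p n : ℕ}

lemma my_descend [NeZero p] [NeZero (p ^ n)] (hp : p.Prime) (hn : 1 ≤ n)
    (A : Finset (ZMod p × ZMod (p ^ n))) (g : ZMod p × ZMod (p ^ n)) (m : ℕ) (hm : ¬ p ∣ m)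
    (h : chiSum p n (m • g) A = 0) : chiSum p n g A = 0 := by
  set ζ := myZeta p n with hζ
  have hprim : IsPrimitiveRoot ζ (p ^ n) := myZeta_prim hp.pos
  have hcop : Nat.Coprime m (p ^ n) :=
    (((hp.coprime_iff_not_dvd).mpr hm).symm).pow_right n
  have hprim' : IsPrimitiveRoot (ζ ^ m) (p ^ n) := hprim.pow_of_coprime m hcop
  set P : Polynomial ℚ := ∑ a ∈ A, Polynomial.X ^ (inn p n g a).val with hP
  have hmg : ∀ a, inn p n (m • g) a = ((m : ℕ) : ZMod (p ^ n)) * inn p n g a := by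
    intro a
    let F : (ZMod p × ZMod (p ^ n)) →+ ZMod (p ^ n) :=
      AddMonoidHom.mk' (fun u => inn p n u a) (fun u u' => my_inn_add_left hp.pos hn u u' a)
    have hF : F (m • g) = m • F g := map_nsmul F m g
    have hFg : F g = inn p n g a := rfl
    have hFmg : F (m • g) = inn p n (m • g) a := rfl
    rw [← hFmg, hF, hFg, nsmul_eq_mul]
  have hevalm : (Polynomial.aeval (ζ ^ m)) P = chiSum p n (m • g) A := by
    rw [hP, map_sum]
    unfold chiSum
    apply Finset.sum_congr rfl
    intro a _
    rw [Polynomial.aeval_X_pow, chi_eq_zeta hp.pos, hmg a, myZeta_val_mul_nat hp.pos,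
      ← pow_mul, mul_comm, pow_mul]
  have heval : (Polynomial.aeval ζ) P = chiSum p n g A := by
    rw [hP, map_sum]
    unfold chiSum
    apply Finset.sum_congr rfl
    intro a _
    rw [Polynomial.aeval_X_pow, chi_eq_zeta hp.pos]
  have hdvd : minpoly ℚ (ζ ^ m) ∣ P := minpoly.dvd ℚ _ (by rw [hevalm]; exact h)
  have hmin : minpoly ℚ (ζ ^ m) = minpoly ℚ ζ :=
    (Polynomial.cyclotomic_eq_minpoly_rat hprim' (pow_pos hp.pos n)).symm.trans
      (Polynomial.cyclotomic_eq_minpoly_rat hprim (pow_pos hp.pos n))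
  obtain ⟨R, hR⟩ := hdvd
  rw [← heval, hR, map_mul, hmin, minpoly.aeval, zero_mul]

end Galois

/-- A spectral set of size `> p^n` is the whole group. -/
theorem eq_univ_of_spectral_card_gt (p n : ℕ) (hp : p.Prime) (hn : 1 ≤ n)
    (A : Finset (ZMod p × ZMod (p ^ n))) (hA : SpectralSet p n A)
    (hcard : p ^ n < A.card) :
    (A : Set (ZMod p × ZMod (p ^ n))) = Set.univ := by
  haveI : NeZero p := ⟨hp.pos.ne'⟩
  haveI : NeZero (p ^ n) := ⟨pow_ne_zero n hp.pos.ne'⟩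
  obtain ⟨B, hcardAB, horth⟩ := hA
  have hBcard : p ^ n < B.card := hcardAB ▸ hcard
  have hzero : ∀ g : ZMod p × ZMod (p ^ n), g ≠ 0 → chiSum p n g A = 0 := by
    intro g hg
    obtain ⟨b, hb, b', hb', hne, m, hpm, hdiff⟩ := my_exists_pair hp hn B hBcard g hg
    have h0 := horth b hb b' hb' hne
    rw [hdiff] at h0
    exact my_descend hp hn A g m hpm h0
  apply Set.eq_univ_iff_forall.mpr
  intro h
  rw [Finset.mem_coe]
  by_contra hh
  have hS1 : ∑ g : ZMod p × ZMod (p ^ n), ∑ a ∈ A, chi p n g (a - h) = (A.card : ℂ) := by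
    have hterm : ∀ g, ∑ a ∈ A, chi p n g (a - h) = chiSum p n g A * chi p n g (-h) := by
      intro g
      unfold chiSum
      rw [Finset.sum_mul]
      apply Finset.sum_congr rfl
      intro a _
      rw [sub_eq_add_neg, chi_eq_zeta hp.pos, chi_eq_zeta hp.pos, chi_eq_zeta hp.pos,
        my_inn_add_right hp.pos hn, myZeta_val_add hp.pos]
    have hchi0 : ∀ x : ZMod p × ZMod (p ^ n), chi p n 0 x = 1 := by
      intro x
      rw [chi_eq_zeta hp.pos, my_inn_zero_left hp.pos, ZMod.val_zero, pow_zero]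
    calc ∑ g : ZMod p × ZMod (p ^ n), ∑ a ∈ A, chi p n g (a - h)
        = ∑ g : ZMod p × ZMod (p ^ n), chiSum p n g A * chi p n g (-h) :=
          Finset.sum_congr rfl fun g _ => hterm g
      _ = chiSum p n 0 A * chi p n 0 (-h) :=
          Fintype.sum_eq_single 0 (fun g hg => by rw [hzero g hg, zero_mul])
      _ = (A.card : ℂ) := by
          have h1 : chiSum p n 0 A = (A.card : ℂ) := by
            unfold chiSum
            rw [Finset.sum_congr rfl (fun a _ => hchi0 a), Finset.sum_const, nsmul_eq_mul,
              mul_one]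
          rw [h1, hchi0, mul_one]
  have hS2 : ∑ g : ZMod p × ZMod (p ^ n), ∑ a ∈ A, chi p n g (a - h) = 0 := by
    rw [Finset.sum_comm]
    apply Finset.sum_eq_zero
    intro a ha
    exact my_sum_chi hp hn (a - h) (sub_ne_zero.mpr (fun e => hh (e ▸ ha)))
  rw [hS1] at hS2
  have : A.card = 0 := by exact_mod_cast hS2
  omega
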